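/- Let 0 < p < q < ∞, let a < b be real numbers and let ω ∈ (a, b). Then the function g(z) = exp(−(1/q) · log(1 − e^{−iω} z)) (principal branch of the complex logarithm) is holomorphic on the open unit disc D = {z ∈ ℂ : |z| < 1}, it belongs to H^p, i.e. sup_{0<r<1} ∫_0^{2π} |g(r e^{iθ})|^p dθ < ∞, and it does not belong to the localized Hardy space H^q_{[a,b]}(D), i.e. sup_{0<r<1} ∫_a^b |g(r e^{iθ})|^q dθ = ∞. -/

import Mathlib

open scoped ENNReal Real
open Complex MeasureTheory Set

/-- `∫_a^b |f(r e^{iθ})|^e dθ`, as a Lebesgue integral with values in `[0, ∞]`. -/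
noncomputable def hardyArcIntegral (f : ℂ → ℂ) (e a b r : ℝ) : ℝ≥0∞ :=
  ∫⁻ θ in Ioc a b, ENNReal.ofReal (‖f ((r : ℂ) * Complex.exp (θ * Complex.I))‖ ^ e)

section Aux

lemma aux_sq_abs_one_sub (r t : ℝ) :
    ‖1 - (r:ℂ) * Complex.exp ((t:ℂ) * Complex.I)‖ ^ 2
      = 1 - 2*r*Real.cos t + r^2 := by
  rw [Complex.sq_norm, Complex.normSq_apply]
  simp [Complex.exp_mul_I, Complex.sub_re, Complex.sub_im, Complex.mul_re, Complex.mul_im,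
    Complex.cos_ofReal_re, Complex.sin_ofReal_re]
  nlinarith [Real.sin_sq_add_cos_sq t]

lemma aux_sin_half_sq (t : ℝ) : Real.sin (t/2) ^ 2 = 1/2 - Real.cos t / 2 := by
  have := Real.sin_sq_eq_half_sub (t/2)
  rw [show 2*(t/2) = t by ring] at this
  linarith

lemma aux_abs_lower (r t : ℝ) (h0 : 0 ≤ r) (h1 : r ≤ 1) :
    |Real.sin (t/2)| / 2 ≤ ‖1 - (r:ℂ) * Complex.exp ((t:ℂ) * Complex.I)‖ := by
  have hA : (0:ℝ) ≤ ‖1 - (r:ℂ) * Complex.exp ((t:ℂ) * Complex.I)‖ :=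
    norm_nonneg _
  have hsq := aux_sq_abs_one_sub r t
  have hs := aux_sin_half_sq t
  have hc1 : Real.cos t ≤ 1 := Real.cos_le_one t
  have hc2 : -1 ≤ Real.cos t := Real.neg_one_le_cos t
  have key : (|Real.sin (t/2)| / 2)^2
      ≤ ‖1 - (r:ℂ) * Complex.exp ((t:ℂ) * Complex.I)‖ ^ 2 := by
    rw [hsq]
    have h' : (|Real.sin (t/2)| / 2)^2 = (1/2 - Real.cos t/2)/4 := by
      rw [div_pow, _root_.sq_abs, hs]; ring
    rw [h']
    nlinarith [sq_nonneg (r - Real.cos t), sq_nonneg r]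
  have h2 := Real.sqrt_le_sqrt key
  rwa [Real.sqrt_sq (by positivity), Real.sqrt_sq hA] at h2

lemma aux_abs_upper (r t : ℝ) (h0 : 0 ≤ r) (h1 : r ≤ 1) :
    ‖1 - (r:ℂ) * Complex.exp ((t:ℂ) * Complex.I)‖ ≤ (1 - r) + |t| := by
  have h2 : ‖1 - Complex.exp ((t:ℂ) * Complex.I)‖ = 2 * |Real.sin (t/2)| := by
    have h3 := aux_sq_abs_one_sub 1 t
    have hs := aux_sin_half_sq t
    have hA : (0:ℝ) ≤ ‖1 - Complex.exp ((t:ℂ) * Complex.I)‖ := norm_nonneg _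
    simp only [Complex.ofReal_one, one_mul] at h3
    nlinarith [_root_.sq_abs (Real.sin (t/2)), abs_nonneg (Real.sin (t/2))]
  have key : (1 : ℂ) - (r:ℂ) * Complex.exp ((t:ℂ) * Complex.I)
      = ((1 - r : ℝ) : ℂ) + (r:ℂ) * (1 - Complex.exp ((t:ℂ) * Complex.I)) := by
    push_cast; ring
  rw [key]
  calc ‖_‖ ≤ ‖((1 - r : ℝ) : ℂ)‖
        + ‖(r:ℂ) * (1 - Complex.exp ((t:ℂ) * Complex.I))‖ := norm_add_le _ _
    _ ≤ (1 - r) + |t| := by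
        rw [Complex.norm_real, Real.norm_eq_abs, norm_mul, Complex.norm_real, Real.norm_eq_abs, h2,
          _root_.abs_of_nonneg (by linarith : (0:ℝ) ≤ 1 - r), _root_.abs_of_nonneg h0]
        have hsin : |Real.sin (t/2)| ≤ |t/2| := Real.abs_sin_le_abs
        have habs : |t/2| = |t|/2 := by rw [abs_div]; simp
        nlinarith [abs_nonneg t, abs_nonneg (Real.sin (t/2))]

lemma aux_rotate (r θ ω : ℝ) :
    Complex.exp (-(ω:ℂ)*Complex.I) * ((r:ℂ) * Complex.exp ((θ:ℂ)*Complex.I))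
      = (r:ℂ) * Complex.exp (((θ-ω:ℝ):ℂ)*Complex.I) := by
  rw [mul_comm, mul_assoc, ← Complex.exp_add]
  push_cast
  ring_nf

lemma aux_norm_g_eq (q : ℝ) (hq : 0 < q) (w : ℂ) (hw : ‖w‖ < 1) :
    ‖Complex.exp (-(1/q:ℂ) * Complex.log (1 - w))‖
      = ‖1 - w‖ ^ (-(1/q)) := by
  have hpos : 0 < ‖1 - w‖ := by
    have h1 : ‖(1:ℂ)‖ - ‖w‖ ≤ ‖(1:ℂ) - w‖ := norm_sub_norm_le 1 w
    simp only [map_one, norm_one] at h1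
    linarith
  rw [Complex.norm_exp]
  have hre : (-(1/q:ℂ) * Complex.log (1 - w)).re
      = Real.log (‖1 - w‖) * (-(1/q)) := by
    rw [show (-(1/q:ℂ)) = ((-(1/q):ℝ):ℂ) by push_cast; ring, Complex.re_ofReal_mul,
      Complex.log_re]
    ring
  rw [hre, Real.rpow_def_of_pos hpos]

lemma aux_norm_g_pow (e q ω r θ : ℝ) (hq : 0 < q) (he : 0 < e) (hr0 : 0 ≤ r) (hr1 : r < 1) :
    ‖Complex.exp (-(1/q:ℂ) * Complex.log (1 - Complex.exp (-(ω:ℂ)*Complex.I)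
        * ((r:ℂ) * Complex.exp ((θ:ℂ)*Complex.I))))‖ ^ e
      = ‖1 - (r:ℂ) * Complex.exp (((θ-ω:ℝ):ℂ)*Complex.I)‖ ^ (-(e/q)) := by
  rw [aux_rotate]
  have habs : ‖(r:ℂ) * Complex.exp (((θ-ω:ℝ):ℂ)*Complex.I)‖ < 1 := by
    rw [norm_mul, Complex.norm_exp, Complex.norm_real, Real.norm_eq_abs]
    simp only [Complex.mul_I_re, Complex.ofReal_im, neg_zero, Real.exp_zero, mul_one]
    rwa [_root_.abs_of_nonneg hr0]
  have hpos : 0 < ‖1 - (r:ℂ) * Complex.exp (((θ-ω:ℝ):ℂ)*Complex.I)‖ := by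
    have h1 : ‖(1:ℂ)‖ - ‖(r:ℂ) * Complex.exp (((θ-ω:ℝ):ℂ)*Complex.I)‖
        ≤ ‖(1:ℂ) - (r:ℂ) * Complex.exp (((θ-ω:ℝ):ℂ)*Complex.I)‖ := norm_sub_norm_le _ _
    simp only [norm_one] at h1
    linarith
  rw [aux_norm_g_eq q hq _ habs, ← Real.rpow_mul hpos.le]
  congr 1
  field_simp

lemma aux_hardy_eq (g : ℂ → ℂ) (e q ω c d r : ℝ)
    (hg : ∀ z : ℂ, g z =
      Complex.exp (-(1 / q : ℂ) * Complex.log (1 - Complex.exp (-(ω : ℂ) * Complex.I) * z)))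
    (hq : 0 < q) (he : 0 < e) (hr0 : 0 ≤ r) (hr1 : r < 1) :
    hardyArcIntegral g e c d r = ∫⁻ θ in Ioc c d,
      ENNReal.ofReal
        (‖1 - (r:ℂ) * Complex.exp (((θ-ω:ℝ):ℂ)*Complex.I)‖ ^ (-(e/q))) := by
  unfold hardyArcIntegral
  refine lintegral_congr fun θ => ?_
  rw [hg, aux_norm_g_pow e q ω r θ hq he hr0 hr1]

lemma aux_piece_finite (α s : ℝ) (h1 : α < 1) :
    ∫⁻ θ in Ioc (s - π) (s + π), ENNReal.ofReal ((2*π)^α * |θ - s| ^ (-α)) < ⊤ := by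
  have hπ := Real.pi_pos
  have hbase : IntervalIntegrable (fun x : ℝ => x ^ (-α)) volume 0 π :=
    intervalIntegral.intervalIntegrable_rpow' (by linarith)
  have hint : IntegrableOn (fun θ => (2*π)^α * |θ - s| ^ (-α)) (Ioc (s - π) (s + π)) volume := by
    have hIoc : Ioc (s - π) (s + π) = Ioc (s - π) s ∪ Ioc s (s + π) := by
      rw [Set.Ioc_union_Ioc_eq_Ioc (by linarith) (by linarith)]
    rw [hIoc]
    apply IntegrableOn.union
    · have h2 : IntervalIntegrable (fun x : ℝ => (s - x) ^ (-α)) volume (s - 0) (s - π) :=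
        hbase.comp_sub_left s
      have h3 : IntegrableOn (fun x : ℝ => (s - x) ^ (-α)) (Ioc (s - π) s) volume := by
        rw [sub_zero] at h2
        rw [← intervalIntegrable_iff_integrableOn_Ioc_of_le (by linarith)]
        exact h2.symm
      refine (h3.congr_fun ?_ measurableSet_Ioc).const_mul _
      intro x hx
      show (s - x) ^ (-α) = |x - s| ^ (-α)
      rw [_root_.abs_of_nonpos (by linarith [hx.2] : x - s ≤ 0), neg_sub]
    · have h2 : IntervalIntegrable (fun x : ℝ => (x - s) ^ (-α)) volume (0 + s) (π + s) :=
        hbase.comp_sub_right s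
      have h2' : IntervalIntegrable (fun x : ℝ => (x - s) ^ (-α)) volume s (s + π) := by
        simpa [add_comm] using h2
      have h3 : IntegrableOn (fun x : ℝ => (x - s) ^ (-α)) (Ioc s (s + π)) volume := by
        rw [← intervalIntegrable_iff_integrableOn_Ioc_of_le (by linarith)]
        exact h2'
      refine (h3.congr_fun ?_ measurableSet_Ioc).const_mul _
      intro x hx
      show (x - s) ^ (-α) = |x - s| ^ (-α)
      rw [_root_.abs_of_nonneg (by linarith [hx.1] : 0 ≤ x - s)]
  exact hint.lintegral_lt_top

lemma aux_pointwise_bound (α ω r θ : ℝ) (k : ℤ) (hα0 : 0 < α) (hr0 : 0 ≤ r) (hr1 : r ≤ 1)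
    (hθ : θ ∈ Ioc (ω + 2*π*k - π) (ω + 2*π*k + π)) (hne : θ ≠ ω + 2*π*k) :
    ‖1 - (r:ℂ) * Complex.exp (((θ-ω:ℝ):ℂ)*Complex.I)‖ ^ (-α)
      ≤ (2*π)^α * |θ - (ω + 2*π*k)| ^ (-α) := by
  have hπ := Real.pi_pos
  set s := ω + 2*π*k with hs
  have hd0 : 0 < |θ - s| := abs_pos.mpr (sub_ne_zero.mpr hne)
  have hd1 : |θ - s| ≤ π := by
    rw [abs_le]
    exact ⟨by linarith [hθ.1], by linarith [hθ.2]⟩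
  have h1 : |Real.sin ((θ-ω)/2)| = |Real.sin ((θ-s)/2)| := by
    have he : (θ-ω)/2 = (θ-s)/2 + k*π := by rw [hs]; ring
    rw [he, Real.sin_add_int_mul_pi, _root_.abs_mul]
    have h11 : |((-1 : ℝ)) ^ k| = 1 := by
      rcases Int.even_or_odd k with hk | hk
      · rw [hk.neg_one_zpow]; norm_num
      · rw [Odd.neg_one_zpow hk]; norm_num
    rw [h11, one_mul]
  have h2 : |θ - s|/π ≤ |Real.sin ((θ-s)/2)| := by
    set u := (θ-s)/2 with hu
    have huabs : |u| = |θ-s|/2 := by rw [hu, abs_div]; norm_num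
    have hu1 : |u| ≤ π/2 := by rw [huabs]; linarith
    have hms := Real.mul_le_sin (abs_nonneg u) hu1
    have habs : Real.sin |u| = |Real.sin u| := by
      rcases le_or_gt 0 u with h | h
      · rw [_root_.abs_of_nonneg h, _root_.abs_of_nonneg (Real.sin_nonneg_of_nonneg_of_le_pi h
          (by rw [_root_.abs_of_nonneg h] at hu1; linarith))]
      · rw [_root_.abs_of_neg h, Real.sin_neg, _root_.abs_of_nonpos
          (Real.sin_nonpos_of_nonpos_of_neg_pi_le h.le
            (by rw [_root_.abs_of_neg h] at hu1; linarith))]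
    rw [habs, huabs] at hms
    calc |θ - s|/π = 2/π * (|θ-s|/2) := by ring
      _ ≤ |Real.sin u| := hms
  have h3 : |θ - s|/(2*π)
      ≤ ‖1 - (r:ℂ) * Complex.exp (((θ-ω:ℝ):ℂ)*Complex.I)‖ := by
    have := aux_abs_lower r (θ-ω) hr0 hr1
    rw [h1] at this
    calc |θ - s|/(2*π) = (|θ-s|/π)/2 := by ring
      _ ≤ |Real.sin ((θ-s)/2)|/2 := by linarith
      _ ≤ _ := this
  have hApos : 0 < |θ-s|/(2*π) := by positivity
  calc ‖1 - (r:ℂ) * Complex.exp (((θ-ω:ℝ):ℂ)*Complex.I)‖ ^ (-α)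
      ≤ (|θ-s|/(2*π))^(-α) := Real.rpow_le_rpow_of_nonpos hApos h3 (neg_nonpos.2 hα0.le)
    _ = (2*π)^α * |θ-s|^(-α) := by
        rw [Real.div_rpow (abs_nonneg _) (by positivity),
          Real.rpow_neg (by positivity : (0:ℝ) ≤ 2*π)]
        field_simp

lemma aux_piece_bound (α ω r : ℝ) (k : ℤ) (hα0 : 0 < α) (hr0 : 0 ≤ r) (hr1 : r ≤ 1) :
    ∫⁻ θ in Ioc (ω + 2*π*k - π) (ω + 2*π*k + π),
      ENNReal.ofReal (‖1 - (r:ℂ) * Complex.exp (((θ-ω:ℝ):ℂ)*Complex.I)‖ ^ (-α))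
    ≤ ∫⁻ θ in Ioc ((ω + 2*π*k) - π) ((ω + 2*π*k) + π),
        ENNReal.ofReal ((2*π)^α * |θ - (ω + 2*π*k)| ^ (-α)) := by
  refine lintegral_mono_ae ?_
  have h2 : ∀ᵐ (θ : ℝ), θ ≠ ω + 2*π*k := by
    refine ae_iff.mpr ?_
    rw [show {a : ℝ | ¬a ≠ ω + 2*π*k} = {ω + 2*π*k} by ext x; simp]
    exact measure_singleton _
  filter_upwards [ae_restrict_mem measurableSet_Ioc, ae_restrict_of_ae h2] with θ hmem hne
  exact ENNReal.ofReal_le_ofReal (aux_pointwise_bound α ω r θ k hα0 hr0 hr1 hmem hne)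


lemma aux_part3_lower (q ω b r : ℝ) (hq : 0 < q) (hωb : ω < b) (hr0 : 0 ≤ r) (hr1 : r < 1) :
    ENNReal.ofReal (Real.log ((b - ω + (1-r))/(1-r)))
      ≤ ∫⁻ θ in Ioc ω b, ENNReal.ofReal
          (‖1 - (r:ℂ) * Complex.exp (((θ-ω:ℝ):ℂ)*Complex.I)‖ ^ (-(q/q))) := by
  set ε := 1 - r with hε
  have hε0 : 0 < ε := by linarith
  have hqq : -(q/q) = (-1 : ℝ) := by rw [div_self hq.ne']
  have hcont : ContinuousOn (fun θ : ℝ => (θ + (ε - ω))⁻¹) (Icc ω b) := by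
    refine (continuousOn_id.add continuousOn_const).inv₀ ?_
    intro x hx
    have h1 := hx.1
    have : (0:ℝ) < x + (ε - ω) := by linarith
    exact this.ne'
  have hint : IntegrableOn (fun θ : ℝ => (θ + (ε - ω))⁻¹) (Ioc ω b) volume :=
    (hcont.integrableOn_Icc).mono_set Ioc_subset_Icc_self
  have hnn : 0 ≤ᵐ[volume.restrict (Ioc ω b)] fun θ : ℝ => (θ + (ε - ω))⁻¹ := by
    filter_upwards [ae_restrict_mem measurableSet_Ioc] with θ hθ
    have h1 := hθ.1
    exact inv_nonneg.mpr (by linarith)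
  have heq : ENNReal.ofReal (∫ θ in Ioc ω b, (θ + (ε - ω))⁻¹)
      = ∫⁻ θ in Ioc ω b, ENNReal.ofReal ((θ + (ε - ω))⁻¹) :=
    MeasureTheory.ofReal_integral_eq_lintegral_ofReal hint hnn
  have hval : ∫ θ in Ioc ω b, (θ + (ε - ω))⁻¹ = Real.log ((b - ω + ε)/ε) := by
    rw [← intervalIntegral.integral_of_le hωb.le,
      intervalIntegral.integral_comp_add_right (fun x => x⁻¹) (ε - ω)]
    have h0 : (0:ℝ) ∉ uIcc (ω + (ε - ω)) (b + (ε - ω)) := by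
      intro h
      rcases Set.mem_uIcc.mp h with ⟨h1, h2⟩ | ⟨h1, h2⟩ <;> linarith
    rw [integral_inv h0, show ω + (ε - ω) = ε by ring, show b + (ε - ω) = b - ω + ε by ring]
  calc ENNReal.ofReal (Real.log ((b - ω + ε)/ε))
      = ∫⁻ θ in Ioc ω b, ENNReal.ofReal ((θ + (ε - ω))⁻¹) := by rw [← hval, heq]
    _ ≤ ∫⁻ θ in Ioc ω b, ENNReal.ofReal
          (‖1 - (r:ℂ) * Complex.exp (((θ-ω:ℝ):ℂ)*Complex.I)‖ ^ (-(q/q))) := by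
        refine lintegral_mono_ae ?_
        filter_upwards [ae_restrict_mem measurableSet_Ioc] with θ hθ
        refine ENNReal.ofReal_le_ofReal ?_
        rw [hqq, Real.rpow_neg_one]
        have hA0 : 0 < ‖1 - (r:ℂ) * Complex.exp (((θ-ω:ℝ):ℂ)*Complex.I)‖ := by
          have habs : ‖(r:ℂ) * Complex.exp (((θ-ω:ℝ):ℂ)*Complex.I)‖ < 1 := by
            rw [norm_mul, Complex.norm_exp, Complex.norm_real, Real.norm_eq_abs]
            simp only [Complex.mul_I_re, Complex.ofReal_im, neg_zero, Real.exp_zero, mul_one]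
            rwa [_root_.abs_of_nonneg hr0]
          have h1 : ‖(1:ℂ)‖ - ‖(r:ℂ) * Complex.exp (((θ-ω:ℝ):ℂ)*Complex.I)‖
              ≤ ‖(1:ℂ) - (r:ℂ) * Complex.exp (((θ-ω:ℝ):ℂ)*Complex.I)‖ := norm_sub_norm_le _ _
          simp only [norm_one] at h1
          linarith
        have hup : ‖1 - (r:ℂ) * Complex.exp (((θ-ω:ℝ):ℂ)*Complex.I)‖
            ≤ θ + (ε - ω) := by
          have := aux_abs_upper r (θ-ω) hr0 hr1.le
          rw [_root_.abs_of_nonneg (by linarith [hθ.1] : (0:ℝ) ≤ θ - ω)] at this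
          linarith
        exact inv_anti₀ hA0 hup

end Aux

/-- Let `0 < p < q < ∞`, `a < b` and `ω ∈ (a, b)`. The function
`g(z) = exp(-(1/q) log(1 - e^{-iω} z))` (principal branch) is holomorphic on the open
unit disc, belongs to `H^p`, and does not belong to the localized Hardy space
`H^q_{[a,b]}(D)`. -/
theorem singular_function_in_Hp_not_localized_Hq (p q a b ω : ℝ)
    (hp : 0 < p) (hpq : p < q) (hab : a < b) (hω : ω ∈ Ioo a b)
    (g : ℂ → ℂ)
    (hg : ∀ z : ℂ, g z =
      Complex.exp (-(1 / q : ℂ) * Complex.log (1 - Complex.exp (-(ω : ℂ) * Complex.I) * z))) :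
    DifferentiableOn ℂ g (Metric.ball (0 : ℂ) 1) ∧
    (⨆ r ∈ Ioo (0 : ℝ) 1, hardyArcIntegral g p 0 (2 * π) r) < ⊤ ∧
    (⨆ r ∈ Ioo (0 : ℝ) 1, hardyArcIntegral g q a b r) = ⊤ := by
  have hπ := Real.pi_pos
  have hq : 0 < q := hp.trans hpq
  obtain ⟨haω, hωb⟩ := hω
  refine ⟨?_, ?_, ?_⟩
  · -- differentiability
    have hgf : g = fun z => Complex.exp (-(1 / q : ℂ)
        * Complex.log (1 - Complex.exp (-(ω : ℂ) * Complex.I) * z)) := funext hg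
    rw [hgf]
    intro z hz
    rw [Metric.mem_ball, dist_zero_right] at hz
    have habsc : ‖Complex.exp (-(ω : ℂ) * Complex.I)‖ = 1 := by
      rw [Complex.norm_exp]; simp
    have hmem : 1 - Complex.exp (-(ω : ℂ) * Complex.I) * z ∈ Complex.slitPlane := by
      rw [Complex.mem_slitPlane_iff]
      left
      have h1 : (Complex.exp (-(ω : ℂ) * Complex.I) * z).re
          ≤ ‖Complex.exp (-(ω : ℂ) * Complex.I) * z‖ := Complex.re_le_norm _
      rw [norm_mul, habsc, one_mul] at h1
      simp only [Complex.sub_re, Complex.one_re]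
      linarith
    have h1 : DifferentiableAt ℂ (fun z : ℂ => 1 - Complex.exp (-(ω : ℂ) * Complex.I) * z) z :=
      (differentiableAt_const _).sub ((differentiableAt_const _).mul differentiableAt_id)
    exact (((h1.clog hmem).const_mul _).cexp).differentiableWithinAt
  · -- H^p membership
    set α := p/q with hα
    have hα0 : 0 < α := div_pos hp hq
    have hα1 : α < 1 := (div_lt_one hq).mpr hpq
    set k0 : ℤ := round (-ω / (2*π)) with hk0
    set s1 : ℝ := ω + 2*π*k0 with hs1
    have hs1abs : |s1| ≤ π := by
      have h := abs_sub_round (-ω / (2*π))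
      have he : s1 = 2*π * ((k0 : ℝ) - (-ω / (2*π))) := by
        rw [hs1]; field_simp; ring
      rw [he, _root_.abs_mul, abs_sub_comm, _root_.abs_of_pos (by linarith : (0:ℝ) < 2*π)]
      nlinarith [abs_nonneg ((-ω / (2*π)) - (k0:ℝ))]
    have hs2 : ω + 2*π*((k0 + 1 : ℤ) : ℝ) = s1 + 2*π := by
      push_cast; rw [hs1]; ring
    set L1 := ∫⁻ θ in Ioc (s1 - π) (s1 + π), ENNReal.ofReal ((2*π)^α * |θ - s1| ^ (-α)) with hL1
    set L2 := ∫⁻ θ in Ioc ((s1 + 2*π) - π) ((s1 + 2*π) + π),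
        ENNReal.ofReal ((2*π)^α * |θ - (s1 + 2*π)| ^ (-α)) with hL2
    have hfin : L1 + L2 < ⊤ :=
      ENNReal.add_lt_top.mpr ⟨aux_piece_finite α s1 hα1, aux_piece_finite α (s1 + 2*π) hα1⟩
    refine lt_of_le_of_lt (iSup₂_le fun r hr => ?_) hfin
    obtain ⟨hr0, hr1⟩ := hr
    rw [aux_hardy_eq g p q ω 0 (2*π) r hg hq hp hr0.le hr1]
    calc (∫⁻ θ in Ioc 0 (2*π), ENNReal.ofReal
          (‖1 - (r:ℂ) * Complex.exp (((θ-ω:ℝ):ℂ)*Complex.I)‖ ^ (-(p/q))))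
        ≤ ∫⁻ θ in Ioc (s1 - π) (s1 + π) ∪ Ioc ((s1 + 2*π) - π) ((s1 + 2*π) + π),
            ENNReal.ofReal
              (‖1 - (r:ℂ) * Complex.exp (((θ-ω:ℝ):ℂ)*Complex.I)‖ ^ (-(p/q))) := by
          refine lintegral_mono_set ?_
          have habs1 := abs_le.mp hs1abs
          rw [show (s1 + 2*π) - π = s1 + π by ring,
            Set.Ioc_union_Ioc_eq_Ioc (by linarith) (by linarith)]
          exact Ioc_subset_Ioc (by linarith) (by linarith)
      _ ≤ (∫⁻ θ in Ioc (s1 - π) (s1 + π), ENNReal.ofReal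
              (‖1 - (r:ℂ) * Complex.exp (((θ-ω:ℝ):ℂ)*Complex.I)‖ ^ (-(p/q))))
          + ∫⁻ θ in Ioc ((s1 + 2*π) - π) ((s1 + 2*π) + π), ENNReal.ofReal
              (‖1 - (r:ℂ) * Complex.exp (((θ-ω:ℝ):ℂ)*Complex.I)‖ ^ (-(p/q))) :=
          lintegral_union_le _ _ _
      _ ≤ L1 + L2 := by
          refine add_le_add ?_ ?_
          · have := aux_piece_bound α ω r k0 hα0 hr0.le hr1.le
            rw [← hs1] at this  -- may need adjusting
            exact this
          · have := aux_piece_bound α ω r (k0 + 1) hα0 hr0.le hr1.le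
            rw [hs2] at this
            exact this
  · -- not in localized H^q
    have hbω : 0 < b - ω := by linarith
    rw [eq_top_iff, ← ENNReal.iSup_natCast]
    refine iSup_le fun n => ?_
    set ε := min ((b - ω)/Real.exp ((n:ℝ)+1)) (1/2) with hεdef
    have hε0 : 0 < ε := lt_min (by positivity) (by norm_num)
    have hε2 : ε ≤ 1/2 := min_le_right _ _
    set r := 1 - ε with hrdef
    have hr : r ∈ Ioo (0:ℝ) 1 := ⟨by rw [hrdef]; linarith, by rw [hrdef]; linarith⟩
    refine le_iSup₂_of_le r hr ?_
    rw [aux_hardy_eq g q q ω a b r hg hq hq (by rw [hrdef]; linarith) (by rw [hrdef]; linarith)]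
    have hlow := aux_part3_lower q ω b r hq hωb (by rw [hrdef]; linarith) (by rw [hrdef]; linarith)
    have h1r : 1 - r = ε := by rw [hrdef]; ring
    rw [h1r] at hlow
    calc (n : ℝ≥0∞) = ENNReal.ofReal n := (ENNReal.ofReal_natCast n).symm
      _ ≤ ENNReal.ofReal (Real.log ((b - ω + ε)/ε)) := by
          apply ENNReal.ofReal_le_ofReal
          have hexp : Real.exp ((n:ℝ)+1) ≤ (b - ω + ε)/ε := by
            have h1 : ε ≤ (b-ω)/Real.exp ((n:ℝ)+1) := min_le_left _ _
            have h2 : Real.exp ((n:ℝ)+1) * ε ≤ b - ω := by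
              have h3 := (le_div_iff₀ (Real.exp_pos _)).mp h1
              linarith [h3]
            rw [le_div_iff₀ hε0]
            linarith
          have hlog := (Real.le_log_iff_exp_le
            (by positivity : (0:ℝ) < (b-ω+ε)/ε)).mpr hexp
          linarith
      _ ≤ ∫⁻ θ in Ioc ω b, ENNReal.ofReal
            (‖1 - (r:ℂ) * Complex.exp (((θ-ω:ℝ):ℂ)*Complex.I)‖ ^ (-(q/q))) := hlow
      _ ≤ ∫⁻ θ in Ioc a b, ENNReal.ofReal
            (‖1 - (r:ℂ) * Complex.exp (((θ-ω:ℝ):ℂ)*Complex.I)‖ ^ (-(q/q))) :=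
          lintegral_mono_set (Ioc_subset_Ioc haω.le le_rfl)
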